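/- In the ring ℂ[α, β, γ] with the grading deg α = deg β = 1, deg γ = 4, the degree-0 part of the localization at γ is the subring ℂ[α⁴/γ, α³β/γ, α²β²/γ, αβ³/γ, β⁴/γ], and the quotient of this subring by the ideal generated by the images of α³ and β³ (i.e., by α⁴/γ, α³β/γ, αβ³/γ, β⁴/γ) is a 2-dimensional ℂ-vector space with basis {1, α²β²/γ}. Hence the subscheme of ℙ(1,1,4) defined by (α³, β³) has length 2. -/

import Mathlib

open MvPolynomial

set_option maxHeartbeats 1000000
set_option synthInstance.maxHeartbeats 1000000

noncomputable section

/-- The Cox ring `S = ℂ[α, β, γ]` of `ℙ(1,1,4)` (`α, β, γ = X 0, X 1, X 2`,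
degrees `1, 1, 4`). -/
abbrev S114 : Type := MvPolynomial (Fin 3) ℂ

/-- The localization `S_γ` of the Cox ring at `γ`. -/
abbrev A114 : Type := Localization.Away (X 2 : S114)

/-- `1/γ` in the localization. -/
def γinv : A114 := IsLocalization.Away.invSelf (X 2 : S114)

/-- `f/γ` in the localization. -/
def el (f : S114) : A114 := algebraMap S114 A114 f * γinv

/-- The subalgebra `ℂ[α⁴/γ, α³β/γ, α²β²/γ, αβ³/γ, β⁴/γ]` of `S_γ`. -/
def A0 : Subalgebra ℂ A114 :=
  Algebra.adjoin ℂ {el (X 0 ^ 4), el (X 0 ^ 3 * X 1), el (X 0 ^ 2 * X 1 ^ 2),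
    el (X 0 * X 1 ^ 3), el (X 1 ^ 4)}

instance : HasQuotient ↥A0 (Ideal ↥A0) := Ideal.instHasQuotient

/-- The ideal of `A0` generated by the images of `α³` and `β³`, namely by
`α⁴/γ, α³β/γ, αβ³/γ, β⁴/γ`. -/
def J16 : Ideal A0 :=
  Ideal.span {⟨el (X 0 ^ 4), Algebra.subset_adjoin (by simp)⟩,
    ⟨el (X 0 ^ 3 * X 1), Algebra.subset_adjoin (by simp)⟩,
    ⟨el (X 0 * X 1 ^ 3), Algebra.subset_adjoin (by simp)⟩,
    ⟨el (X 1 ^ 4), Algebra.subset_adjoin (by simp)⟩}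

instance instCR : CommRing (↥A0) := inferInstance
instance instCRQ : CommRing (↥A0 ⧸ J16) := Ideal.Quotient.commRing J16
instance instAlgQ : Algebra ℂ (↥A0 ⧸ J16) := Ideal.Quotient.algebra ℂ


section AuxPart1

lemma mem1 : el (X 0 ^ 4) ∈ A0 := Algebra.subset_adjoin (Set.mem_insert _ _)
lemma mem2 : el (X 0 ^ 3 * X 1) ∈ A0 :=
  Algebra.subset_adjoin (Set.mem_insert_iff.mpr (Or.inr (Set.mem_insert _ _)))
lemma mem3 : el (X 0 ^ 2 * X 1 ^ 2) ∈ A0 :=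
  Algebra.subset_adjoin (Set.mem_insert_iff.mpr (Or.inr
    (Set.mem_insert_iff.mpr (Or.inr (Set.mem_insert _ _)))))
lemma mem4 : el (X 0 * X 1 ^ 3) ∈ A0 :=
  Algebra.subset_adjoin (Set.mem_insert_iff.mpr (Or.inr (Set.mem_insert_iff.mpr (Or.inr
    (Set.mem_insert_iff.mpr (Or.inr (Set.mem_insert _ _)))))))
lemma mem5 : el (X 1 ^ 4) ∈ A0 :=
  Algebra.subset_adjoin (Set.mem_insert_iff.mpr (Or.inr (Set.mem_insert_iff.mpr (Or.inr
    (Set.mem_insert_iff.mpr (Or.inr (Set.mem_insert_iff.mpr (Or.inr rfl))))))))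

lemma alg_pow_mul_γinv_pow (k : ℕ) : algebraMap S114 A114 (X 2 ^ k) * γinv ^ k = 1 := by
  rw [map_pow, γinv, ← mul_pow, IsLocalization.Away.mul_invSelf, one_pow]

lemma gen_mem (a b : ℕ) (h : a + b = 4) :
    algebraMap S114 A114 (X 0 ^ a * X 1 ^ b) * γinv ∈ A0 := by
  have hc : (a = 0 ∧ b = 4) ∨ (a = 1 ∧ b = 3) ∨ (a = 2 ∧ b = 2) ∨ (a = 3 ∧ b = 1) ∨
      (a = 4 ∧ b = 0) := by omega
  rcases hc with ⟨rfl, rfl⟩ | ⟨rfl, rfl⟩ | ⟨rfl, rfl⟩ | ⟨rfl, rfl⟩ | ⟨rfl, rfl⟩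
  · rw [pow_zero, one_mul]; exact mem5
  · rw [pow_one]; exact mem4
  · exact mem3
  · rw [pow_one]; exact mem2
  · rw [pow_zero, mul_one]; exact mem1

lemma key (m : ℕ) : ∀ a b : ℕ, a + b = 4 * m →
    algebraMap S114 A114 (X 0 ^ a * X 1 ^ b) * γinv ^ m ∈ A0 := by
  induction m with
  | zero =>
    intro a b h
    obtain ⟨rfl, rfl⟩ : a = 0 ∧ b = 0 := by omega
    simpa using one_mem A0
  | succ m ih =>
    intro a b h
    obtain ⟨a1, a2, b1, b2, rfl, rfl, h4, hm⟩ :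
        ∃ a1 a2 b1 b2 : ℕ, a = a1 + a2 ∧ b = b1 + b2 ∧ a1 + b1 = 4 ∧ a2 + b2 = 4 * m :=
      ⟨min a 4, a - min a 4, 4 - min a 4, b - (4 - min a 4), by omega, by omega, by omega,
        by omega⟩
    have heq : algebraMap S114 A114 (X 0 ^ (a1 + a2) * X 1 ^ (b1 + b2)) * γinv ^ (m + 1)
        = (algebraMap S114 A114 (X 0 ^ a1 * X 1 ^ b1) * γinv)
          * (algebraMap S114 A114 (X 0 ^ a2 * X 1 ^ b2) * γinv ^ m) := by
      simp only [pow_add, pow_succ, map_mul]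
      ring
    rw [heq]
    exact mul_mem (gen_mem a1 b1 h4) (ih a2 b2 hm)

lemma weight_eval (d : Fin 3 →₀ ℕ) :
    Finsupp.weight (![1, 1, 4] : Fin 3 → ℤ) d = d 0 + d 1 + 4 * d 2 := by
  rw [Finsupp.weight_apply, Finsupp.sum_fintype _ _ (by intro i; simp), Fin.sum_univ_three]
  simp [Matrix.cons_val_zero, Matrix.cons_val_one]
  ring

lemma monomial_eval (d : Fin 3 →₀ ℕ) (c : ℂ) :
    (monomial d c : S114) = C c * (X 0 ^ d 0 * X 1 ^ d 1 * X 2 ^ d 2) := by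
  rw [monomial_eq, Finsupp.prod_fintype _ _ (by intro i; simp), Fin.prod_univ_three]

lemma mem_A0_of (n : ℕ) (f : S114)
    (hf : f ∈ weightedHomogeneousSubmodule ℂ (![1, 1, 4] : Fin 3 → ℤ) (4 * n)) :
    algebraMap S114 A114 f * γinv ^ n ∈ A0 := by
  have hf' : IsWeightedHomogeneous (![1, 1, 4] : Fin 3 → ℤ) f (4 * n) := hf
  rw [f.as_sum, map_sum, Finset.sum_mul]
  apply sum_mem
  intro d hd
  have hdeg := hf' (mem_support_iff.1 hd)
  rw [weight_eval] at hdeg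
  have hdeg' : d 0 + d 1 + 4 * d 2 = 4 * n := by exact_mod_cast hdeg
  have hk2 : d 0 + d 1 = 4 * (n - d 2) := by omega
  rw [monomial_eval, map_mul]
  have h1 : γinv ^ n = γinv ^ (n - d 2) * γinv ^ d 2 := by rw [← pow_add]; congr 1; omega
  rw [h1]
  have heq : (algebraMap S114 A114) (C (coeff d f)) *
        (algebraMap S114 A114) (X 0 ^ d 0 * X 1 ^ d 1 * X 2 ^ d 2) *
        (γinv ^ (n - d 2) * γinv ^ d 2)
      = (algebraMap S114 A114) (C (coeff d f)) *
        ((algebraMap S114 A114 (X 0 ^ d 0 * X 1 ^ d 1) * γinv ^ (n - d 2)) *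
          (algebraMap S114 A114 (X 2 ^ d 2) * γinv ^ d 2)) := by
    simp only [map_mul]; ring
  rw [heq, alg_pow_mul_γinv_pow, mul_one]
  have hC : (algebraMap S114 A114) (C (coeff d f)) = algebraMap ℂ A114 (coeff d f) := by
    rw [← MvPolynomial.algebraMap_eq, ← IsScalarTower.algebraMap_apply]
  rw [hC]
  exact mul_mem (Subalgebra.algebraMap_mem A0 _) (key _ _ _ hk2)

lemma XpowWH (m : ℕ) :
    IsWeightedHomogeneous (![1, 1, 4] : Fin 3 → ℤ) ((X 2 : S114) ^ m) (4 * m) := by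
  rw [X_pow_eq_monomial]
  exact isWeightedHomogeneous_monomial _ _ _
    (by rw [weight_eval]; simp [Finsupp.single_apply])

lemma el_gen_eq (f : S114) : el f * algebraMap S114 A114 (X 2 ^ 1) = algebraMap S114 A114 f := by
  rw [el, pow_one, mul_assoc, mul_comm γinv, γinv, IsLocalization.Away.mul_invSelf, mul_one]

lemma genWH' (f : S114) (d : Fin 3 →₀ ℕ) (hf : f = monomial d 1)
    (h : (d 0 : ℤ) + d 1 + 4 * d 2 = 4) :
    f ∈ weightedHomogeneousSubmodule ℂ (![1, 1, 4] : Fin 3 → ℤ) (4 * ((1 : ℕ) : ℤ)) := by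
  subst hf
  rw [mem_weightedHomogeneousSubmodule]
  simp only [Nat.cast_one, mul_one]
  exact isWeightedHomogeneous_monomial _ _ _ (by rw [weight_eval, h])

lemma part1 : (A0 : Set A114) = {x : A114 | ∃ (n : ℕ) (f : S114),
    f ∈ weightedHomogeneousSubmodule ℂ (![1, 1, 4] : Fin 3 → ℤ) (4 * n) ∧
    x * algebraMap S114 A114 (X 2 ^ n) = algebraMap S114 A114 f} := by
  ext x
  simp only [SetLike.mem_coe, Set.mem_setOf_eq]
  constructor
  · intro hx
    induction hx using Algebra.adjoin_induction with
    | mem y hy =>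
      rcases hy with rfl | rfl | rfl | rfl | rfl
      · exact ⟨1, _, genWH' _ (Finsupp.single 0 4) (X_pow_eq_monomial)
          (by norm_num [Finsupp.single_apply, Fin.ext_iff]), el_gen_eq _⟩
      · exact ⟨1, _, genWH' _ (Finsupp.single 0 3 + Finsupp.single 1 1)
          (by rw [X_pow_eq_monomial, ← pow_one (X 1), X_pow_eq_monomial, monomial_mul, mul_one])
          (by norm_num [Finsupp.single_apply, Fin.ext_iff]), el_gen_eq _⟩
      · exact ⟨1, _, genWH' _ (Finsupp.single 0 2 + Finsupp.single 1 2)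
          (by rw [X_pow_eq_monomial, X_pow_eq_monomial (n := 1), monomial_mul, mul_one])
          (by norm_num [Finsupp.single_apply, Fin.ext_iff]), el_gen_eq _⟩
      · exact ⟨1, _, genWH' _ (Finsupp.single 0 1 + Finsupp.single 1 3)
          (by rw [← pow_one (X 0), X_pow_eq_monomial, X_pow_eq_monomial, monomial_mul, mul_one])
          (by norm_num [Finsupp.single_apply, Fin.ext_iff]), el_gen_eq _⟩
      · exact ⟨1, _, genWH' _ (Finsupp.single 1 4) (X_pow_eq_monomial)
          (by norm_num [Finsupp.single_apply, Fin.ext_iff]), el_gen_eq _⟩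
    | algebraMap c =>
      refine ⟨0, C c, ?_, ?_⟩
      · rw [mem_weightedHomogeneousSubmodule]
        simpa using isWeightedHomogeneous_C _ c
      · rw [pow_zero, map_one, mul_one, ← MvPolynomial.algebraMap_eq,
          ← IsScalarTower.algebraMap_apply]
    | add p q hp hq ihp ihq =>
      obtain ⟨n, f, hf, he⟩ := ihp
      obtain ⟨m, g, hg, he'⟩ := ihq
      refine ⟨n + m, f * X 2 ^ m + g * X 2 ^ n, ?_, ?_⟩
      · rw [mem_weightedHomogeneousSubmodule]
        have hcast : (4 : ℤ) * ((n + m : ℕ) : ℤ) = 4 * (n : ℤ) + 4 * (m : ℤ) := by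
          push_cast; ring
        rw [hcast]
        exact ((hf : IsWeightedHomogeneous _ f _).mul (XpowWH m)).add
          (by rw [show (4 * (n : ℤ) + 4 * (m : ℤ)) = 4 * (m : ℤ) + 4 * (n : ℤ) from by ring]
              exact (hg : IsWeightedHomogeneous _ g _).mul (XpowWH n))
      · have hsplit : (p + q) * algebraMap S114 A114 (X 2 ^ (n + m))
            = (p * algebraMap S114 A114 (X 2 ^ n)) * algebraMap S114 A114 (X 2 ^ m)
              + (q * algebraMap S114 A114 (X 2 ^ m)) * algebraMap S114 A114 (X 2 ^ n) := by
          rw [pow_add, map_mul]; ring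
        rw [hsplit, he, he', ← map_mul, ← map_mul, ← map_add]
    | mul p q hp hq ihp ihq =>
      obtain ⟨n, f, hf, he⟩ := ihp
      obtain ⟨m, g, hg, he'⟩ := ihq
      refine ⟨n + m, f * g, ?_, ?_⟩
      · rw [mem_weightedHomogeneousSubmodule]
        have hcast : (4 : ℤ) * ((n + m : ℕ) : ℤ) = 4 * (n : ℤ) + 4 * (m : ℤ) := by
          push_cast; ring
        rw [hcast]
        exact (hf : IsWeightedHomogeneous _ f _).mul (hg : IsWeightedHomogeneous _ g _)
      · have hsplit : (p * q) * algebraMap S114 A114 (X 2 ^ (n + m))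
            = (p * algebraMap S114 A114 (X 2 ^ n)) * (q * algebraMap S114 A114 (X 2 ^ m)) := by
          rw [pow_add, map_mul]; ring
        rw [hsplit, he, he', ← map_mul]
  · rintro ⟨n, f, hf, he⟩
    have hx : x = algebraMap S114 A114 f * γinv ^ n := by
      calc x = x * (algebraMap S114 A114 (X 2 ^ n) * γinv ^ n) := by
              rw [alg_pow_mul_γinv_pow, mul_one]
        _ = (x * algebraMap S114 A114 (X 2 ^ n)) * γinv ^ n := by ring
        _ = algebraMap S114 A114 f * γinv ^ n := by rw [he]
    rw [hx]
    exact mem_A0_of n f hf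

end AuxPart1

section AuxPart2

-- target ring ℂ[x,y]/(x⁴, x³y, xy³, y⁴)
abbrev P2 : Type := MvPolynomial (Fin 2) ℂ
def I2 : Ideal P2 := Ideal.span {X 0 ^ 4, X 0 ^ 3 * X 1, X 0 * X 1 ^ 3, X 1 ^ 4}
abbrev R2 : Type := P2 ⧸ I2

def θ : S114 →+* R2 :=
  (Ideal.Quotient.mk I2).comp (aeval (R := ℂ) ![X 0, X 1, 1]).toRingHom

lemma θγ : θ (X 2) = 1 := by
  simp [θ]

def Θ : A114 →+* R2 :=
  IsLocalization.Away.lift (g := θ) (X 2) (by rw [θγ]; exact isUnit_one)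

lemma Θ_alg (f : S114) : Θ (algebraMap S114 A114 f) = θ f :=
  IsLocalization.Away.lift_eq _ _ _

lemma Θ_γinv : Θ γinv = 1 := by
  have h := congrArg Θ (IsLocalization.Away.mul_invSelf (S := A114) (X 2 : S114))
  rw [map_mul, map_one, Θ_alg, θγ, one_mul] at h
  exact h

lemma Θ_el (f : S114) : Θ (el f) = θ f := by
  rw [el, map_mul, Θ_alg, Θ_γinv, mul_one]

def Θ' : A0 →+* R2 := Θ.comp (Subalgebra.val A0).toRingHom

lemma J16_le_ker : J16 ≤ RingHom.ker Θ' := by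
  rw [J16, Ideal.span_le]
  have step : ∀ (f : S114) (h : el f ∈ A0) (g : P2),
      (aeval (R := ℂ) ![X 0, X 1, (1 : P2)]) f = g → g ∈ I2 →
      (⟨el f, h⟩ : A0) ∈ (RingHom.ker Θ' : Set A0) := by
    intro f h g hg hgI
    rw [SetLike.mem_coe, RingHom.mem_ker]
    show Θ (el f) = 0
    rw [Θ_el, θ]
    simp only [RingHom.coe_comp, Function.comp_apply, AlgHom.toRingHom_eq_coe,
      RingHom.coe_coe, hg]
    rwa [Ideal.Quotient.eq_zero_iff_mem]
  rintro z (rfl | rfl | rfl | rfl)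
  · exact step _ _ (X 0 ^ 4) (by simp) (Ideal.subset_span (by simp))
  · exact step _ _ (X 0 ^ 3 * X 1) (by simp) (Ideal.subset_span (by simp))
  · exact step _ _ (X 0 * X 1 ^ 3) (by simp) (Ideal.subset_span (by simp))
  · exact step _ _ (X 1 ^ 4) (by simp) (Ideal.subset_span (by simp))

lemma coeff_gen_zero (p : P2) (s : Fin 2 →₀ ℕ) (m : Fin 2 →₀ ℕ) (hns : ¬ s ≤ m) :
    coeff m (p * monomial s (1 : ℂ)) = 0 := by
  rw [coeff_mul_monomial', if_neg hns]

lemma I2_coeff_zero (p : P2) (hp : p ∈ I2) (m : Fin 2 →₀ ℕ)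
    (h0 : ¬ Finsupp.single 0 4 ≤ m) (h1 : ¬ Finsupp.single 0 3 + Finsupp.single 1 1 ≤ m)
    (h2 : ¬ Finsupp.single 0 1 + Finsupp.single 1 3 ≤ m)
    (h3 : ¬ Finsupp.single 1 4 ≤ m) :
    coeff m p = 0 := by
  rw [I2] at hp
  have e0 : (X 0 ^ 4 : P2) = monomial (Finsupp.single 0 4) 1 := X_pow_eq_monomial
  have e1 : (X 0 ^ 3 * X 1 : P2)
      = monomial (Finsupp.single 0 3 + Finsupp.single 1 1) 1 := by
    rw [X_pow_eq_monomial, ← pow_one (X 1), X_pow_eq_monomial, monomial_mul, mul_one]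
  have e2 : (X 0 * X 1 ^ 3 : P2)
      = monomial (Finsupp.single 0 1 + Finsupp.single 1 3) 1 := by
    rw [← pow_one (X 0), X_pow_eq_monomial, X_pow_eq_monomial, monomial_mul, mul_one]
  have e3 : (X 1 ^ 4 : P2) = monomial (Finsupp.single 1 4) 1 := X_pow_eq_monomial
  rw [e0, e1, e2, e3] at hp
  rw [Ideal.mem_span_insert] at hp
  obtain ⟨a, z, hz, rfl⟩ := hp
  rw [Ideal.mem_span_insert] at hz
  obtain ⟨b, z2, hz2, rfl⟩ := hz
  rw [Ideal.mem_span_insert] at hz2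
  obtain ⟨c, z3, hz3, rfl⟩ := hz2
  rw [Ideal.mem_span_singleton'] at hz3
  obtain ⟨d, rfl⟩ := hz3
  simp only [coeff_add]
  rw [coeff_gen_zero _ _ _ h0, coeff_gen_zero _ _ _ h1, coeff_gen_zero _ _ _ h2,
    coeff_gen_zero _ _ _ h3]
  ring

lemma not_le_single (m : Fin 2 →₀ ℕ) (i : Fin 2) (k : ℕ) (h : m i < k) :
    ¬ Finsupp.single i k ≤ m := by
  intro hle
  have := hle i
  simp [Finsupp.single_apply] at this
  omega

lemma indep_I2 (c d : ℂ) (h : C c + C d * (X 0 ^ 2 * X 1 ^ 2) ∈ I2) : c = 0 ∧ d = 0 := by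
  have em : (C d * (X 0 ^ 2 * X 1 ^ 2) : P2)
      = monomial (Finsupp.single 0 2 + Finsupp.single 1 2) d := by
    rw [X_pow_eq_monomial, X_pow_eq_monomial, monomial_mul, mul_one, C_mul_monomial, mul_one]
  rw [em] at h
  constructor
  · have h0 := I2_coeff_zero _ h 0
      (not_le_single _ 0 4 (by simp)) ?_ ?_ (not_le_single _ 1 4 (by simp))
    · rw [coeff_add, coeff_C, coeff_monomial, if_pos rfl, if_neg (by
        intro hh
        have := congrArg (fun t => t 0) hh
        simp [Finsupp.single_apply] at this)] at h0
      simpa using h0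
    · intro hle
      have := hle 0
      simp [Finsupp.single_apply] at this
    · intro hle
      have := hle 1
      simp [Finsupp.single_apply] at this
  · set m2 : Fin 2 →₀ ℕ := Finsupp.single 0 2 + Finsupp.single 1 2 with hm2
    have hm20 : m2 0 = 2 := by simp [hm2, Finsupp.single_apply]
    have hm21 : m2 1 = 2 := by simp [hm2, Finsupp.single_apply]
    have h1 := I2_coeff_zero _ h m2
      (not_le_single _ 0 4 (by omega)) ?_ ?_ (not_le_single _ 1 4 (by omega))
    · rw [coeff_add, coeff_C, coeff_monomial, if_pos rfl, if_neg (by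
        intro hh
        have := congrArg (fun t => t 0) hh.symm
        simp [hm2, Finsupp.single_apply] at this)] at h1
      simpa using h1
    · intro hle
      have := hle 0
      simp [Finsupp.single_apply, hm20] at this
    · intro hle
      have := hle 1
      simp [Finsupp.single_apply, hm21] at this

def uu : A0 := ⟨el (X 0 ^ 2 * X 1 ^ 2), mem3⟩

lemma smul_eq_algC (c : ℂ) (x : A114) : c • x = algebraMap S114 A114 (C c) * x := by
  rw [← algebraMap_smul S114 c x]
  have := Algebra.smul_def (algebraMap ℂ S114 c) x
  rw [this, MvPolynomial.algebraMap_eq]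

lemma quot_indep (c d : ℂ)
    (h : c • (1 : ↥A0 ⧸ J16) + d • (Ideal.Quotient.mk J16 uu) = 0) : c = 0 ∧ d = 0 := by
  have hz : Ideal.Quotient.mk J16 (c • (1 : A0) + d • uu) = 0 := by
    rw [← Ideal.Quotient.mkₐ_eq_mk ℂ J16] at h ⊢
    rw [map_add, map_smul, map_smul, map_one]
    exact h
  rw [Ideal.Quotient.eq_zero_iff_mem] at hz
  have h0 : Θ' (c • (1 : A0) + d • uu) = 0 := J16_le_ker hz
  have hval : ((c • (1 : A0) + d • uu : A0) : A114)
      = algebraMap S114 A114 (C c) * 1 + algebraMap S114 A114 (C d) * el (X 0 ^ 2 * X 1 ^ 2) := by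
    push_cast
    rw [smul_eq_algC, smul_eq_algC]
    rfl
  have hΘ : Θ' (c • (1 : A0) + d • uu)
      = Ideal.Quotient.mk I2 (C c + C d * (X 0 ^ 2 * X 1 ^ 2)) := by
    have hrw : Θ' (c • (1 : A0) + d • uu) = Θ ((c • (1 : A0) + d • uu : A0) : A114) := rfl
    rw [hrw, hval, map_add, map_mul, map_mul, map_one, mul_one, Θ_alg, Θ_alg, Θ_el]
    rw [θ]
    simp only [RingHom.coe_comp, Function.comp_apply, AlgHom.toRingHom_eq_coe, RingHom.coe_coe]
    rw [← map_mul, ← map_add]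
    congr 1
    simp [MvPolynomial.algebraMap_eq]
  rw [hΘ, Ideal.Quotient.eq_zero_iff_mem] at h0
  exact indep_I2 c d h0

lemma g1J : (⟨el (X 0 ^ 4), mem1⟩ : A0) ∈ J16 := Ideal.subset_span (Set.mem_insert _ _)

lemma el_mul_el (f g : S114) :
    el f * el g = algebraMap S114 A114 (f * g) * (γinv * γinv) := by
  rw [el, el, map_mul]; ring

lemma uu_sq : uu * uu ∈ J16 := by
  have hval : uu * uu = (⟨el (X 0 ^ 4), mem1⟩ : A0) * ⟨el (X 1 ^ 4), mem5⟩ := by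
    apply Subtype.ext
    show el (X 0 ^ 2 * X 1 ^ 2) * el (X 0 ^ 2 * X 1 ^ 2) = el (X 0 ^ 4) * el (X 1 ^ 4)
    rw [el_mul_el, el_mul_el]
    rw [show (X 0 ^ 2 * X 1 ^ 2 * (X 0 ^ 2 * X 1 ^ 2) : S114) = X 0 ^ 4 * X 1 ^ 4 by ring]
  rw [hval]
  exact Ideal.mul_mem_right _ _ g1J

def Q : Submodule ℂ (↥A0 ⧸ J16) :=
  Submodule.span ℂ {Ideal.Quotient.mk J16 1, Ideal.Quotient.mk J16 uu}

lemma one_mem_Q : Ideal.Quotient.mk J16 1 ∈ Q := Submodule.subset_span (Set.mem_insert _ _)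
lemma uu_mem_Q : Ideal.Quotient.mk J16 uu ∈ Q :=
  Submodule.subset_span (Set.mem_insert_iff.mpr (Or.inr rfl))

lemma mk_uu_sq : Ideal.Quotient.mk J16 uu * Ideal.Quotient.mk J16 uu = 0 := by
  rw [← map_mul, Ideal.Quotient.eq_zero_iff_mem]
  exact uu_sq

lemma Qmul : ∀ p ∈ Q, ∀ q ∈ Q, p * q ∈ Q := by
  intro p hp q hq
  rw [Q, Submodule.mem_span_pair] at hp hq
  obtain ⟨a, b, rfl⟩ := hp
  obtain ⟨a', b', rfl⟩ := hq
  set o := Ideal.Quotient.mk J16 1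
  set w := Ideal.Quotient.mk J16 uu
  have hexp : (a • o + b • w) * (a' • o + b' • w)
      = (a * a') • (o * o) + (a * b') • (o * w) + (b * a') • (w * o) + (b * b') • (w * w) := by
    rw [mul_add, add_mul, add_mul, smul_mul_smul_comm, smul_mul_smul_comm, smul_mul_smul_comm,
      smul_mul_smul_comm]
    ring
  rw [hexp]
  have ho : o = 1 := map_one _
  rw [show w * w = 0 from mk_uu_sq, smul_zero, add_zero, ho, one_mul, mul_one, one_mul]
  exact add_mem (add_mem (Submodule.smul_mem _ _ (by rw [← ho]; exact one_mem_Q))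
    (Submodule.smul_mem _ _ uu_mem_Q)) (Submodule.smul_mem _ _ uu_mem_Q)

lemma mk_mem_Q_of_mem_J (z : A0) (hz : z ∈ J16) : Ideal.Quotient.mk J16 z ∈ Q := by
  rw [Ideal.Quotient.eq_zero_iff_mem.mpr hz]
  exact zero_mem _

lemma span_top (y : ↥A0 ⧸ J16) : y ∈ Q := by
  obtain ⟨x, rfl⟩ := Ideal.Quotient.mk_surjective y
  obtain ⟨xv, hx⟩ := x
  induction hx using Algebra.adjoin_induction with
  | mem v hv =>
    rcases hv with rfl | rfl | rfl | rfl | rfl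
    · exact mk_mem_Q_of_mem_J _ g1J
    · exact mk_mem_Q_of_mem_J _ (Ideal.subset_span (Set.mem_insert_iff.mpr
        (Or.inr (Set.mem_insert _ _))))
    · exact uu_mem_Q
    · exact mk_mem_Q_of_mem_J _ (Ideal.subset_span (Set.mem_insert_iff.mpr (Or.inr
        (Set.mem_insert_iff.mpr (Or.inr (Set.mem_insert _ _))))))
    · exact mk_mem_Q_of_mem_J _ (Ideal.subset_span (Set.mem_insert_iff.mpr (Or.inr
        (Set.mem_insert_iff.mpr (Or.inr (Set.mem_insert_iff.mpr (Or.inr rfl)))))))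
  | algebraMap c =>
    have h1 : (⟨algebraMap ℂ A114 c, Subalgebra.algebraMap_mem _ c⟩ : A0) = c • 1 :=
      Subtype.ext (by simp [Algebra.algebraMap_eq_smul_one])
    rw [h1, ← Ideal.Quotient.mkₐ_eq_mk ℂ, map_smul, Ideal.Quotient.mkₐ_eq_mk ℂ]
    exact Submodule.smul_mem _ _ one_mem_Q
  | add x y hx hy ihx ihy =>
    have h1 : (⟨x + y, add_mem hx hy⟩ : A0) = ⟨x, hx⟩ + ⟨y, hy⟩ := rfl
    rw [h1, map_add]
    exact add_mem ihx ihy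
  | mul x y hx hy ihx ihy =>
    have h1 : (⟨x * y, mul_mem hx hy⟩ : A0) = ⟨x, hx⟩ * ⟨y, hy⟩ := rfl
    rw [h1, map_mul]
    exact Qmul _ ihx _ ihy

def vB : Fin 2 → (↥A0 ⧸ J16) := ![Ideal.Quotient.mk J16 1, Ideal.Quotient.mk J16 uu]

lemma vB_li : LinearIndependent ℂ vB := by
  apply Fintype.linearIndependent_iff.mpr
  intro g hg
  rw [Fin.sum_univ_two] at hg
  simp only [vB, Matrix.cons_val_zero, Matrix.cons_val_one, Matrix.head_cons, map_one] at hg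
  obtain ⟨h0, h1⟩ := quot_indep _ _ hg
  intro i; fin_cases i <;> assumption

lemma vB_span : ⊤ ≤ Submodule.span ℂ (Set.range vB) := by
  have hr : Set.range vB = {Ideal.Quotient.mk J16 1, Ideal.Quotient.mk J16 uu} := by
    ext z
    constructor
    · rintro ⟨i, rfl⟩
      fin_cases i
      · exact Set.mem_insert _ _
      · exact Set.mem_insert_iff.mpr (Or.inr rfl)
    · rintro (rfl | rfl)
      exacts [⟨0, rfl⟩, ⟨1, rfl⟩]
  intro y _
  rw [hr]
  exact span_top y

def bB : Module.Basis (Fin 2) ℂ (↥A0 ⧸ J16) := Module.Basis.mk vB_li vB_span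

end AuxPart2

/-- The degree-0 part of the localization of the Cox ring of `ℙ(1,1,4)` at `γ` is
`ℂ[α⁴/γ, α³β/γ, α²β²/γ, αβ³/γ, β⁴/γ]` (an element has degree 0 iff after multiplying by
`γⁿ` it becomes a polynomial of weighted degree `4n`), and the quotient of this subring
by the ideal generated by the images of `α³` and `β³` is a 2-dimensional `ℂ`-vector
space with basis `{1, α²β²/γ}`; hence the subscheme of `ℙ(1,1,4)` defined by `(α³, β³)`
has length 2. -/
theorem stmt16 :
    ((A0 : Set A114) = {x : A114 | ∃ (n : ℕ) (f : S114),
        f ∈ weightedHomogeneousSubmodule ℂ (![1, 1, 4] : Fin 3 → ℤ) (4 * n) ∧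
        x * algebraMap S114 A114 (X 2 ^ n) = algebraMap S114 A114 f}) ∧
    Module.finrank ℂ (↥A0 ⧸ J16) = 2 ∧
    ∃ b : Module.Basis (Fin 2) ℂ (↥A0 ⧸ J16),
      b 0 = Ideal.Quotient.mk J16 1 ∧
      b 1 = Ideal.Quotient.mk J16
        ⟨el (X 0 ^ 2 * X 1 ^ 2), Algebra.subset_adjoin (by simp)⟩ := by
  refine ⟨part1, ?_, ⟨bB, ?_, ?_⟩⟩
  · rw [Module.finrank_eq_card_basis bB, Fintype.card_fin]
  · rw [bB, Module.Basis.mk_apply]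
    rfl
  · rw [bB, Module.Basis.mk_apply]
    rfl

end
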